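/- Let $\phi_{F+}(\mathbf{z}) = \frac{1}{\sqrt{r}}\exp(-\|\mathbf{z}\|^2/2)\left(\exp(\omega_i^\top \mathbf{z})\right)_{i=1}^r$ with i.i.d. $\omega_i \sim \mathcal{N}(0, I_N)$. Then $\mathbb{E}[\phi_{F+}(\mathbf{x})^\top \phi_{F+}(\mathbf{y})] = \exp(\mathbf{x}^\top \mathbf{y})$ for all $\mathbf{x}, \mathbf{y} \in \mathbb{R}^N$. -/

import Mathlib

open MeasureTheory ProbabilityTheory Real
open scoped ENNReal NNReal

lemma gauss_pdf_mul_exp (t x : ℝ) :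
    gaussianPDFReal 0 1 x * rexp (x * t) = rexp (t ^ 2 / 2) * gaussianPDFReal t 1 x := by
  simp only [gaussianPDFReal, NNReal.coe_one, mul_one, sub_zero]
  rw [mul_assoc, ← Real.exp_add, mul_comm (rexp (t ^ 2 / 2)), mul_assoc, ← Real.exp_add]
  ring_nf

lemma integrable_exp_gaussian (t : ℝ) :
    Integrable (fun x => rexp (x * t)) (gaussianReal 0 1) := by
  rw [gaussianReal_of_var_ne_zero 0 one_ne_zero, gaussianPDF_def]
  have h : (fun x => ENNReal.ofReal (gaussianPDFReal 0 1 x))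
      = fun x => ((gaussianPDFReal 0 1 x).toNNReal : ℝ≥0∞) := rfl
  rw [h, integrable_withDensity_iff_integrable_smul
    (measurable_gaussianPDFReal 0 1).real_toNNReal]
  have h2 : (fun x => ((gaussianPDFReal 0 1 x).toNNReal : ℝ≥0) • rexp (x * t))
      = fun x => rexp (t ^ 2 / 2) * gaussianPDFReal t 1 x := by
    funext x
    rw [NNReal.smul_def, Real.coe_toNNReal _ (gaussianPDFReal_nonneg 0 1 x)]
    exact gauss_pdf_mul_exp t x
  rw [h2]
  exact (integrable_gaussianPDFReal t 1).const_mul _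

lemma integral_exp_gaussian (t : ℝ) :
    ∫ x, rexp (x * t) ∂(gaussianReal 0 1) = rexp (t ^ 2 / 2) := by
  rw [gaussianReal_of_var_ne_zero 0 one_ne_zero, gaussianPDF_def]
  have h : (fun x => ENNReal.ofReal (gaussianPDFReal 0 1 x))
      = fun x => ((gaussianPDFReal 0 1 x).toNNReal : ℝ≥0∞) := rfl
  rw [h, integral_withDensity_eq_integral_smul
    (measurable_gaussianPDFReal 0 1).real_toNNReal]
  have h2 : (fun x => ((gaussianPDFReal 0 1 x).toNNReal : ℝ≥0) • rexp (x * t))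
      = fun x => rexp (t ^ 2 / 2) * gaussianPDFReal t 1 x := by
    funext x
    rw [NNReal.smul_def, Real.coe_toNNReal _ (gaussianPDFReal_nonneg 0 1 x)]
    exact gauss_pdf_mul_exp t x
  rw [h2, integral_const_mul, integral_gaussianPDFReal_eq_one t one_ne_zero, mul_one]


set_option maxHeartbeats 1000000 in
/-- The FAVOR+ positive random feature map
`φ(z) = (1/√r) exp(-‖z‖²/2) (exp(ωᵢᵀz))ᵢ` with i.i.d. `ωᵢ ~ N(0, I_N)` gives an
unbiased estimator of the softmax kernel: `E[φ(x)ᵀφ(y)] = exp(xᵀy)`. -/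
theorem favorPlus_unbiased (N r : ℕ) (hr : 0 < r) (x y : Fin N → ℝ) :
    ∫ ω : Fin r → Fin N → ℝ,
        ∑ i : Fin r,
          (1 / Real.sqrt r * Real.exp (-(∑ j, x j ^ 2) / 2) * Real.exp (∑ j, ω i j * x j)) *
          (1 / Real.sqrt r * Real.exp (-(∑ j, y j ^ 2) / 2) * Real.exp (∑ j, ω i j * y j))
        ∂(Measure.pi fun _ : Fin r => Measure.pi fun _ : Fin N => gaussianReal 0 1) =
      Real.exp (∑ j, x j * y j) := by
  letI : MeasureSpace ℝ := ⟨gaussianReal 0 1⟩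
  haveI : IsProbabilityMeasure (volume : Measure ℝ) :=
    inferInstanceAs (IsProbabilityMeasure (gaussianReal 0 1))
  haveI : IsProbabilityMeasure (volume : Measure (Fin N → ℝ)) := by infer_instance
  set z : Fin N → ℝ := fun j => x j + y j with hz
  set C : ℝ := (1 / Real.sqrt r * Real.exp (-(∑ j, x j ^ 2) / 2)) *
      (1 / Real.sqrt r * Real.exp (-(∑ j, y j ^ 2) / 2)) with hC
  have hmeas : (Measure.pi fun _ : Fin r => Measure.pi fun _ : Fin N => gaussianReal 0 1)
      = (volume : Measure (Fin r → Fin N → ℝ)) := rfl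
  set H : (Fin N → ℝ) → ℝ := fun w => ∏ j, rexp (w j * z j) with hH
  have hHint : Integrable H (volume : Measure (Fin N → ℝ)) :=
    Integrable.fintype_prod fun j => integrable_exp_gaussian (z j)
  have hHval : ∫ w, H w = rexp (∑ j, z j ^ 2 / 2) := by
    rw [hH]
    beta_reduce
    rw [show (volume : Measure (Fin N → ℝ)) = Measure.pi fun _ => volume from rfl,
      MeasureTheory.integral_fintype_prod_eq_prod (f := fun j (x : ℝ) => rexp (x * z j))]
    have h1 : ∀ j ∈ Finset.univ, (∫ x : ℝ, rexp (x * z j)) = rexp (z j ^ 2 / 2) :=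
      fun j _ => integral_exp_gaussian (z j)
    rw [Finset.prod_congr rfl h1]
    exact (Real.exp_sum _ _).symm
  have hrw : ∀ ω : Fin r → Fin N → ℝ, ∀ i : Fin r,
      (1 / Real.sqrt r * Real.exp (-(∑ j, x j ^ 2) / 2) * Real.exp (∑ j, ω i j * x j)) *
      (1 / Real.sqrt r * Real.exp (-(∑ j, y j ^ 2) / 2) * Real.exp (∑ j, ω i j * y j))
      = C * H (ω i) := by
    intro ω i
    simp only [hH, hC]
    have h1 : (∑ j, ω i j * x j) + (∑ j, ω i j * y j) = ∑ j, ω i j * z j := by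
      rw [← Finset.sum_add_distrib]
      exact Finset.sum_congr rfl fun j _ => by simp only [hz]; ring
    rw [show (∏ j, rexp (ω i j * z j)) = rexp (∑ j, ω i j * z j) from (Real.exp_sum _ _).symm,
      ← h1, Real.exp_add]
    ring
  simp_rw [hrw, hmeas]
  have hfun : ∀ i : Fin r, (fun ω : Fin r → Fin N → ℝ => C * H (ω i))
      = fun ω => C * ∏ i', (fun i' (w : Fin N → ℝ) => if i' = i then H w else 1) i' (ω i') := by
    intro i
    funext ω
    dsimp only
    rw [Finset.prod_ite_eq' Finset.univ i (fun i' => H (ω i'))]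
    simp
  have hGint : ∀ i : Fin r, Integrable (fun ω : Fin r → Fin N → ℝ => C * H (ω i)) volume := by
    intro i
    rw [hfun i]
    refine (Integrable.fintype_prod (f := fun i' (w : Fin N → ℝ) => if i' = i then H w else 1)
      fun i' => ?_).const_mul C
    by_cases h : i' = i <;> simp [h, hHint]
  have hGval : ∀ i : Fin r,
      ∫ ω : Fin r → Fin N → ℝ, C * H (ω i) = C * rexp (∑ j, z j ^ 2 / 2) := by
    intro i
    rw [hfun i]
    rw [integral_const_mul,
      show (volume : Measure (Fin r → Fin N → ℝ)) = Measure.pi fun _ => volume from rfl,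
      MeasureTheory.integral_fintype_prod_eq_prod
      (f := fun i' (w : Fin N → ℝ) => if i' = i then H w else 1)]
    have h2 : ∀ i' ∈ Finset.univ, (∫ w : Fin N → ℝ, if i' = i then H w else 1)
        = if i' = i then rexp (∑ j, z j ^ 2 / 2) else 1 := by
      intro i' _
      by_cases h : i' = i <;> simp [h, hHval]
    rw [Finset.prod_congr rfl h2,
      Finset.prod_ite_eq' Finset.univ i (fun _ => rexp (∑ j, z j ^ 2 / 2))]
    simp
  rw [integral_finset_sum Finset.univ (fun i _ => hGint i)]
  simp_rw [hGval]
  rw [Finset.sum_const, Finset.card_univ, Fintype.card_fin, nsmul_eq_mul]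
  have hsz : ∑ j, z j ^ 2 / 2 = (∑ j, x j ^ 2) / 2 + (∑ j, y j ^ 2) / 2 + ∑ j, x j * y j := by
    have h1 : ∀ j ∈ Finset.univ, z j ^ 2 / 2 = x j ^ 2 / 2 + y j ^ 2 / 2 + x j * y j :=
      fun j _ => by simp only [hz]; ring
    rw [Finset.sum_congr rfl h1, Finset.sum_add_distrib, Finset.sum_add_distrib,
      ← Finset.sum_div, ← Finset.sum_div]
  have hsr : Real.sqrt r * Real.sqrt r = (r : ℝ) := Real.mul_self_sqrt (Nat.cast_nonneg r)
  have hrne : (r : ℝ) ≠ 0 := Nat.cast_ne_zero.mpr hr.ne'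
  have hrr : (r : ℝ) * (1 / Real.sqrt r * (1 / Real.sqrt r)) = 1 := by
    rw [div_mul_div_comm, hsr]
    field_simp
  have hA : rexp (-(∑ j, x j ^ 2) / 2) * rexp ((∑ j, x j ^ 2) / 2) = 1 := by
    rw [← Real.exp_add, neg_div, neg_add_cancel, Real.exp_zero]
  have hB : rexp (-(∑ j, y j ^ 2) / 2) * rexp ((∑ j, y j ^ 2) / 2) = 1 := by
    rw [← Real.exp_add, neg_div, neg_add_cancel, Real.exp_zero]
  rw [hC, hsz, Real.exp_add, Real.exp_add]
  calc (r : ℝ) * (1 / Real.sqrt r * rexp (-(∑ j, x j ^ 2) / 2) *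
          (1 / Real.sqrt r * rexp (-(∑ j, y j ^ 2) / 2)) *
          (rexp ((∑ j, x j ^ 2) / 2) * rexp ((∑ j, y j ^ 2) / 2) * rexp (∑ j, x j * y j)))
      = ((r : ℝ) * (1 / Real.sqrt r * (1 / Real.sqrt r))) *
          ((rexp (-(∑ j, x j ^ 2) / 2) * rexp ((∑ j, x j ^ 2) / 2)) *
           ((rexp (-(∑ j, y j ^ 2) / 2) * rexp ((∑ j, y j ^ 2) / 2)) *
            rexp (∑ j, x j * y j))) := by ring
    _ = rexp (∑ j, x j * y j) := by rw [hrr, hA, hB]; ring
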